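/- Let (p_1,…,p_N) be a probability distribution on [N], and let κ := (1/2)∑_{i=1}^N |p_i − 1/N|. Let L* be the set of indices i ∈ [N] such that p_i ≤ (1 − κ/4)/N. Then |L*| ≥ κN/2. -/

import Mathlib

open Finset

/-- with κ := (1/2)∑|p_i − 1/N|, the set L* of "very light" indices
(those with p_i ≤ (1 − κ/4)/N) has size at least κN/2. -/
theorem very_light_elements {N : ℕ} (p : Fin N → ℝ)
    (hp : ∀ i, 0 ≤ p i) (hsum : ∑ i, p i = 1)
    (κ : ℝ) (hκ : κ = (1 / 2) * ∑ i, |p i - 1 / N|) :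
    κ * N / 2 ≤ ((univ.filter (fun i : Fin N => p i ≤ (1 - κ / 4) / N)).card : ℝ) := by
  rcases Nat.eq_zero_or_pos N with h0 | hN
  · subst h0; simp at hsum
  have hN' : (0:ℝ) < N := by exact_mod_cast hN
  have hκ0 : 0 ≤ κ := by rw [hκ]; positivity
  have hzero : ∑ i, (p i - 1 / N) = 0 := by
    rw [Finset.sum_sub_distrib, hsum, Finset.sum_const, Finset.card_univ, Fintype.card_fin,
      nsmul_eq_mul]
    field_simp
    norm_num
  have hkey : κ = ∑ i, max (1 / N - p i) 0 := by
    rw [hκ]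
    have h1 : ∀ i : Fin N, |p i - 1/N| = (p i - 1/N) + 2 * max (1/N - p i) 0 := by
      intro i
      rcases le_total (p i) (1/N) with h | h
      · rw [abs_of_nonpos (by linarith), max_eq_left (by linarith)]; ring
      · rw [abs_of_nonneg (by linarith), max_eq_right (by linarith)]; ring
    rw [Finset.sum_congr rfl (fun i _ => h1 i), Finset.sum_add_distrib, hzero, ← Finset.mul_sum]
    ring
  set S := univ.filter (fun i : Fin N => p i ≤ (1 - κ / 4) / N) with hS
  have hA : ∑ i ∈ S, max (1/N - p i) 0 ≤ (S.card : ℝ) * (1/N) := by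
    calc ∑ i ∈ S, max (1/N - p i) 0 ≤ ∑ _i ∈ S, (1/N : ℝ) :=
          Finset.sum_le_sum (fun i _ => max_le (by linarith [hp i]) (by positivity))
      _ = (S.card : ℝ) * (1/N) := by rw [Finset.sum_const, nsmul_eq_mul]
  have hB : ∑ i ∈ univ.filter (fun i : Fin N => ¬ p i ≤ (1 - κ / 4) / N),
      max (1/N - p i) 0 ≤ (N : ℝ) * (κ / (4*N)) := by
    calc ∑ i ∈ univ.filter (fun i : Fin N => ¬ p i ≤ (1 - κ / 4) / N), max (1/N - p i) 0
        ≤ ∑ _i ∈ univ.filter (fun i : Fin N => ¬ p i ≤ (1 - κ / 4) / N), (κ/(4*N)) := by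
          apply Finset.sum_le_sum
          intro i hi
          rw [Finset.mem_filter] at hi
          have : (1 - κ / 4) / N < p i := lt_of_not_ge hi.2
          apply max_le
          · rw [div_lt_iff₀ hN'] at this
            have e1 : 1/(N:ℝ) - p i = (1 - p i * N)/N := by field_simp
            have e2 : κ/(4*(N:ℝ)) = (κ/4)/N := by ring
            rw [e1, e2, div_le_div_iff₀ hN' hN']
            nlinarith
          · positivity
      _ ≤ (N : ℝ) * (κ/(4*N)) := by
          rw [Finset.sum_const, nsmul_eq_mul]
          apply mul_le_mul_of_nonneg_right _ (by positivity)
          have := Finset.card_filter_le (univ : Finset (Fin N))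
            (fun i : Fin N => ¬ p i ≤ (1 - κ / 4) / N)
          simp only [Finset.card_univ, Fintype.card_fin] at this
          exact_mod_cast this
  have hcard : (S.card : ℝ) ≤ N := by
    exact_mod_cast (Finset.card_filter_le _ _).trans_eq (by simp)
  have hsum2 : ∑ i, max (1/N - p i) 0 ≤ (S.card : ℝ) * (1/N) + (N : ℝ) * (κ / (4*N)) := by
    rw [← Finset.sum_filter_add_sum_filter_not univ
      (fun i : Fin N => p i ≤ (1 - κ / 4) / N)]
    exact add_le_add hA hB
  have hsplit : κ ≤ (S.card : ℝ) * (1/N) + (N : ℝ) * (κ / (4*N)) := hkey.trans_le hsum2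
  have hNk : (N:ℝ) * (κ/(4*N)) = κ/4 := by field_simp
  rw [hNk] at hsplit
  have : κ * N ≤ (S.card : ℝ) + κ/4 * N := by
    have := mul_le_mul_of_nonneg_right hsplit (le_of_lt hN')
    calc κ * N ≤ ((S.card : ℝ) * (1/N) + κ/4) * N := this
      _ = (S.card : ℝ) + κ/4 * N := by field_simp
  nlinarith
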